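/- For T admitting an A-adjoint and α ∈ [0,1], ‖T‖_{A,α}² ≥ max{ (1/2)‖(α/4)(T^{♯A}T + TT^{♯A}) + (1−α)T^{♯A}T‖_A , (1/3)‖(α/2)(T^{♯A}T + TT^{♯A}) + (1−α)T^{♯A}T‖_A }. -/

import Mathlib

open scoped ComplexOrder
open ContinuousLinearMap Filter Topology

variable {H : Type*} [NormedAddCommGroup H] [InnerProductSpace ℂ H] [CompleteSpace H]

/-- The A-semi-inner product `⟨x, y⟩_A = ⟨A x, y⟩` (Mathlib convention: conjugate
linear in the first variable). -/
noncomputable def aInner (A : H →L[ℂ] H) (x y : H) : ℂ := inner ℂ (A x) y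

/-- The A-seminorm `‖x‖_A = sqrt ⟨x, x⟩_A`. -/
noncomputable def aNorm (A : H →L[ℂ] H) (x : H) : ℝ := Real.sqrt (aInner A x x).re

/-- `T` is A-bounded. -/
def ABounded (A T : H →L[ℂ] H) : Prop := ∃ c > 0, ∀ x, aNorm A (T x) ≤ c * aNorm A x

/-- The A-operator seminorm. -/
noncomputable def opNormA (A T : H →L[ℂ] H) : ℝ :=
  sSup {r | ∃ x ∈ closure (Set.range A), aNorm A x = 1 ∧ r = aNorm A (T x)}

/-- The A-numerical radius. -/
noncomputable def wA (A T : H →L[ℂ] H) : ℝ :=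
  sSup {r | ∃ x, aNorm A x = 1 ∧ r = ‖aInner A (T x) x‖}

/-- The A-Crawford number. -/
noncomputable def cA (A T : H →L[ℂ] H) : ℝ :=
  sInf {r | ∃ x, aNorm A x = 1 ∧ r = ‖aInner A (T x) x‖}

/-- The `A_α`-seminorm `‖T‖_{A,α}`. -/
noncomputable def alphaNorm (A T : H →L[ℂ] H) (α : ℝ) : ℝ :=
  sSup {r | ∃ x, aNorm A x = 1 ∧
    r = Real.sqrt (α * ‖aInner A (T x) x‖ ^ 2 + (1 - α) * aNorm A (T x) ^ 2)}

/-- `S` is the A-adjoint `T^{♯_A}` of `T`: the solution of `A X = T* A` whose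
range lies in the closure of the range of `A`. -/
def IsAAdjoint (A T S : H →L[ℂ] H) : Prop :=
  A ∘L S = (ContinuousLinearMap.adjoint T) ∘L A ∧ ∀ x, S x ∈ closure (Set.range A)


section Aux
open ComplexConjugate
variable {A : H →L[ℂ] H}

lemma re_nn (hA : A.IsPositive) (x : H) : 0 ≤ (inner ℂ (A x) x : ℂ).re := hA.re_inner_nonneg_left x

lemma sa (hA : A.IsPositive) (x y : H) : (inner ℂ (A x) y : ℂ) = inner ℂ x (A y) := by
  conv_lhs => rw [← hA.isSelfAdjoint.adjoint_eq]
  exact adjoint_inner_left A y x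

lemma aNorm_nonneg (x : H) : 0 ≤ aNorm A x := Real.sqrt_nonneg _

lemma aNorm_sq (hA : A.IsPositive) (x : H) : (aNorm A x)^2 = (inner ℂ (A x) x : ℂ).re := by
  simp only [aNorm, aInner]
  rw [Real.sq_sqrt (re_nn hA x)]

lemma inner_self_real (hA : A.IsPositive) (x : H) :
    (inner ℂ (A x) x : ℂ) = ((aNorm A x)^2 : ℝ) := by
  have h1 : conj (inner ℂ (A x) x : ℂ) = (inner ℂ (A x) x : ℂ) := by
    rw [inner_conj_symm, sa hA x x]
  have him : (inner ℂ (A x) x : ℂ).im = 0 := by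
    have := congrArg Complex.im h1
    simp only [Complex.conj_im] at this; linarith
  rw [aNorm_sq hA]
  exact (Complex.ext (by simp) (by simp [him])).symm

lemma aNorm_smul (hA : A.IsPositive) (c : ℂ) (x : H) :
    aNorm A (c • x) = ‖c‖ * aNorm A x := by
  have h : (inner ℂ (A (c • x)) (c • x) : ℂ) = (‖c‖:ℂ)^2 * (inner ℂ (A x) x : ℂ) := by
    rw [map_smul, inner_smul_left, inner_smul_right, ← mul_assoc,
      ← Complex.normSq_eq_conj_mul_self, Complex.normSq_eq_norm_sq]
    norm_num
  simp only [aNorm, aInner, h]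
  have : ((‖c‖:ℂ)^2 * (inner ℂ (A x) x : ℂ)).re
      = (‖c‖)^2 * (inner ℂ (A x) x : ℂ).re := by
    rw [← Complex.ofReal_pow, Complex.re_ofReal_mul]
  rw [this, Real.sqrt_mul (sq_nonneg _), Real.sqrt_sq (norm_nonneg c)]

lemma inner_conj_sa (hA : A.IsPositive) (u v : H) :
    (inner ℂ (A v) u : ℂ) = conj (inner ℂ (A u) v : ℂ) := by
  rw [sa hA v u, inner_conj_symm]

lemma aCS (hA : A.IsPositive) (u v : H) :
    ‖inner ℂ (A u) v‖ ≤ aNorm A u * aNorm A v := by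
  by_cases hz : (inner ℂ (A u) v : ℂ) = 0
  · rw [hz]; simpa using mul_nonneg (aNorm_nonneg u) (aNorm_nonneg v)
  set z : ℂ := inner ℂ (A u) v with hzdef
  set c : ℂ := conj z / ‖z‖ with hc
  have habs : ‖z‖ ≠ 0 := (norm_ne_zero_iff.mpr hz)
  have hcabs : ‖c‖ = 1 := by
    rw [hc, norm_div, Complex.norm_conj, Complex.norm_real, Real.norm_eq_abs, abs_of_nonneg (norm_nonneg z)]
    field_simp
  set w : H := c • v with hw
  have hcz : c * z = (‖z‖ : ℂ) := by
    have h2 : conj z * z = ((‖z‖ : ℝ) : ℂ)^2 := by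
      rw [← Complex.normSq_eq_conj_mul_self, Complex.normSq_eq_norm_sq]; push_cast; ring
    rw [hc, div_mul_eq_mul_div, h2, sq, mul_div_assoc]
    rw [div_self (by exact_mod_cast habs), mul_one]
  have e1 : (inner ℂ (A u) w : ℂ) = (‖z‖ : ℂ) := by
    rw [hw, inner_smul_right, ← hzdef, hcz]
  have e2 : (inner ℂ (A w) u : ℂ) = (‖z‖ : ℂ) := by
    rw [inner_conj_sa hA u w, e1]
    simp
  have e3 : (inner ℂ (A w) w : ℂ) = ((aNorm A v)^2 : ℝ) := by
    rw [inner_self_real hA, hw, aNorm_smul hA, hcabs, one_mul]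
  have key : ∀ t : ℝ, 0 ≤ (aNorm A v)^2 * (t * t) + (2 * ‖z‖) * t + (aNorm A u)^2 := by
    intro t
    have h0 := re_nn hA (u + (t:ℂ) • w)
    have hexp : (inner ℂ (A (u + (t:ℂ) • w)) (u + (t:ℂ) • w) : ℂ)
        = inner ℂ (A u) u + (t:ℂ) * inner ℂ (A u) w + (t:ℂ) * inner ℂ (A w) u
          + (t:ℂ)^2 * inner ℂ (A w) w := by
      simp only [map_add, map_smul, inner_add_left, inner_add_right,
        inner_smul_left, inner_smul_right, Complex.conj_ofReal]
      ring
    rw [hexp, e1, e2, e3, inner_self_real hA u] at h0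
    rw [show ((aNorm A u^2 : ℝ) : ℂ) + (t:ℂ) * (‖z‖ : ℂ) + (t:ℂ) * (‖z‖ : ℂ)
        + (t:ℂ)^2 * ((aNorm A v^2 : ℝ) : ℂ)
        = (((aNorm A u^2 + t * ‖z‖ + t * ‖z‖ + t^2 * aNorm A v^2 : ℝ)) : ℂ) by
      push_cast; ring] at h0
    rw [Complex.ofReal_re] at h0
    nlinarith [h0]
  have hd := discrim_le_zero key
  rw [discrim] at hd
  have hsq : (‖z‖)^2 ≤ (aNorm A u * aNorm A v)^2 := by nlinarith
  calc ‖z‖ = Real.sqrt ((‖z‖)^2) := (Real.sqrt_sq (norm_nonneg z)).symm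
    _ ≤ Real.sqrt ((aNorm A u * aNorm A v)^2) := Real.sqrt_le_sqrt hsq
    _ = aNorm A u * aNorm A v := Real.sqrt_sq (mul_nonneg (aNorm_nonneg u) (aNorm_nonneg v))

lemma aNorm_le_norm (hA : A.IsPositive) (x : H) :
    aNorm A x ≤ Real.sqrt ‖A‖ * ‖x‖ := by
  have h1 : (aNorm A x)^2 ≤ ‖A‖ * ‖x‖^2 := by
    rw [aNorm_sq hA]
    calc (inner ℂ (A x) x : ℂ).re ≤ ‖(inner ℂ (A x) x : ℂ)‖ := Complex.re_le_norm _
      _ ≤ ‖A x‖ * ‖x‖ := by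
          exact norm_inner_le_norm _ _
      _ ≤ ‖A‖ * ‖x‖ * ‖x‖ := by
          have := A.le_opNorm x
          nlinarith [norm_nonneg x, norm_nonneg (A x)]
      _ = ‖A‖ * ‖x‖^2 := by ring
  calc aNorm A x = Real.sqrt ((aNorm A x)^2) := (Real.sqrt_sq (aNorm_nonneg x)).symm
    _ ≤ Real.sqrt (‖A‖ * ‖x‖^2) := Real.sqrt_le_sqrt h1
    _ = Real.sqrt ‖A‖ * ‖x‖ := by
        rw [Real.sqrt_mul (norm_nonneg A), Real.sqrt_sq (norm_nonneg x)]

lemma zero_of_aNorm_zero (hA : A.IsPositive) {x : H} (hx : aNorm A x = 0) (u : H) :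
    ‖inner ℂ (A u) x‖ = 0 := by
  have := aCS hA u x
  rw [hx, mul_zero] at this
  exact le_antisymm this (norm_nonneg _)

/-- A-selfadjoint operators are A-bounded with bound `‖R‖`. -/
lemma L2 (hA : A.IsPositive) (R : H →L[ℂ] H)
    (hR : A ∘L R = (ContinuousLinearMap.adjoint R) ∘L A) (z : H) :
    aNorm A (R z) ≤ ‖R‖ * aNorm A z := by
  -- A ∘ R^m = adjoint (R^m) ∘ A
  have hRm : ∀ m : ℕ, A ∘L (R^m) = (ContinuousLinearMap.adjoint (R^m)) ∘L A := by
    intro m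
    induction m with
    | zero =>
      rw [pow_zero]
      ext x
      simp [← star_eq_adjoint]
    | succ n ih =>
      have hsp : (R^(n+1) : H →L[ℂ] H) = (R^n) ∘L R := by rw [pow_succ]; rfl
      rw [hsp, ← ContinuousLinearMap.comp_assoc, ih, ContinuousLinearMap.comp_assoc, hR,
        ← ContinuousLinearMap.comp_assoc]
      congr 1
      rw [← star_eq_adjoint, ← star_eq_adjoint, ← star_eq_adjoint,
        ← ContinuousLinearMap.mul_def, ← ContinuousLinearMap.mul_def, star_mul, star_pow,
        pow_mul_comm']
  have step : ∀ m : ℕ, (aNorm A ((R^m) z))^2 ≤ aNorm A z * aNorm A ((R^(m+m)) z) := by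
    intro m
    have e : (inner ℂ (A ((R^m) z)) ((R^m) z) : ℂ) = inner ℂ (A z) ((R^(m+m)) z) := by
      have happ : A ((R^m) z) = (ContinuousLinearMap.adjoint (R^m)) (A z) :=
        congrFun (congrArg DFunLike.coe (hRm m)) z
      rw [happ, adjoint_inner_left]
      congr 1
      rw [pow_add]
      rfl
    rw [aNorm_sq hA, e]
    calc (inner ℂ (A z) ((R^(m+m)) z) : ℂ).re ≤ ‖inner ℂ (A z) ((R^(m+m)) z)‖ :=
        Complex.re_le_norm _
      _ ≤ aNorm A z * aNorm A ((R^(m+m)) z) := aCS hA z _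
  -- main induction
  have claim : ∀ n : ℕ, (aNorm A (R z))^(2^n) ≤ (aNorm A z)^(2^n - 1) * aNorm A ((R^(2^n)) z) := by
    intro n
    induction n with
    | zero => simp [pow_one]
    | succ n ih =>
      have h2 : (aNorm A (R z))^(2^(n+1)) = ((aNorm A (R z))^(2^n))^2 := by
        rw [← pow_mul, pow_succ]
      have h3 : ((aNorm A (R z))^(2^n))^2 ≤ ((aNorm A z)^(2^n - 1) * aNorm A ((R^(2^n)) z))^2 :=
        pow_le_pow_left₀ (pow_nonneg (aNorm_nonneg _) _) ih 2
      have h4 : ((aNorm A z)^(2^n - 1) * aNorm A ((R^(2^n)) z))^2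
          = (aNorm A z)^(2^n - 1 + (2^n - 1)) * (aNorm A ((R^(2^n)) z))^2 := by
        rw [mul_pow, ← pow_mul, mul_two]
      have h5 := step (2^n)
      have h6 : (aNorm A z)^(2^n - 1 + (2^n - 1)) * (aNorm A ((R^(2^n)) z))^2
          ≤ (aNorm A z)^(2^n - 1 + (2^n - 1)) * (aNorm A z * aNorm A ((R^(2^n + 2^n)) z)) :=
        mul_le_mul_of_nonneg_left h5 (pow_nonneg (aNorm_nonneg _) _)
      have hexp : (aNorm A z)^(2^n - 1 + (2^n - 1)) * (aNorm A z * aNorm A ((R^(2^n + 2^n)) z))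
          = (aNorm A z)^(2^(n+1) - 1) * aNorm A ((R^(2^(n+1))) z) := by
        have h2n : 1 ≤ 2^n := Nat.one_le_two_pow
        have : 2^n - 1 + (2^n - 1) + 1 = 2^(n+1) - 1 := by omega
        rw [← mul_assoc, ← pow_succ, this, show 2^n + 2^n = 2^(n+1) by omega]
      calc (aNorm A (R z))^(2^(n+1)) = ((aNorm A (R z))^(2^n))^2 := h2
        _ ≤ _ := h3
        _ = _ := h4
        _ ≤ _ := h6
        _ = _ := by rw [hexp]
  -- conclude
  by_contra hcon
  push_neg at hcon
  have hRz : 0 < aNorm A (R z) := lt_of_le_of_lt (mul_nonneg (norm_nonneg R) (aNorm_nonneg z)) hcon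
  have hRn : 0 < ‖R‖ := by
    rcases eq_or_lt_of_le (norm_nonneg R) with h | h
    · exfalso
      have : R = 0 := by rwa [eq_comm, norm_eq_zero] at h
      rw [this] at hRz
      simp only [ContinuousLinearMap.zero_apply] at hRz
      have : aNorm A (0 : H) = 0 := by
        simp [aNorm, aInner]
      linarith
    · exact h
  have hz : 0 < aNorm A z := by
    rcases eq_or_lt_of_le (aNorm_nonneg (A := A) z) with h | h
    · exfalso
      have h1 := claim 1
      rw [← h] at h1
      norm_num at h1
      nlinarith
    · exact h
  set q : ℝ := aNorm A (R z) / (‖R‖ * aNorm A z) with hq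
  have hq1 : 1 < q := (one_lt_div (by positivity)).2 hcon
  have hbound : ∀ n : ℕ, q^(2^n) ≤ Real.sqrt ‖A‖ * ‖z‖ / aNorm A z := by
    intro n
    have h1 := claim n
    have h2 : aNorm A ((R^(2^n)) z) ≤ Real.sqrt ‖A‖ * (‖R‖^(2^n) * ‖z‖) := by
      calc aNorm A ((R^(2^n)) z) ≤ Real.sqrt ‖A‖ * ‖(R^(2^n)) z‖ := aNorm_le_norm hA _
        _ ≤ Real.sqrt ‖A‖ * (‖R‖^(2^n) * ‖z‖) := by
            apply mul_le_mul_of_nonneg_left _ (Real.sqrt_nonneg _)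
            calc ‖(R^(2^n)) z‖ ≤ ‖R^(2^n)‖ * ‖z‖ := (R^(2^n)).le_opNorm z
              _ ≤ ‖R‖^(2^n) * ‖z‖ :=
                  mul_le_mul_of_nonneg_right (norm_pow_le' R (Nat.pos_of_ne_zero (by positivity))) (norm_nonneg z)
    have h3 : (aNorm A (R z))^(2^n) ≤ (aNorm A z)^(2^n - 1) * (Real.sqrt ‖A‖ * (‖R‖^(2^n) * ‖z‖)) :=
      le_trans h1 (mul_le_mul_of_nonneg_left h2 (pow_nonneg (aNorm_nonneg _) _))
    rw [hq, div_pow, div_le_div_iff₀ (by positivity) hz]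
    rw [mul_pow]
    calc (aNorm A (R z))^(2^n) * aNorm A z
        ≤ ((aNorm A z)^(2^n - 1) * (Real.sqrt ‖A‖ * (‖R‖^(2^n) * ‖z‖))) * aNorm A z :=
          mul_le_mul_of_nonneg_right h3 (le_of_lt hz)
      _ = Real.sqrt ‖A‖ * ‖z‖ * (‖R‖^(2^n) * ((aNorm A z)^(2^n - 1) * aNorm A z)) := by ring
      _ = Real.sqrt ‖A‖ * ‖z‖ * (‖R‖^(2^n) * (aNorm A z)^(2^n)) := by
          rw [← pow_succ, Nat.sub_add_cancel Nat.one_le_two_pow]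
  obtain ⟨n, hn⟩ := pow_unbounded_of_one_lt (Real.sqrt ‖A‖ * ‖z‖ / aNorm A z) hq1
  have : q^n ≤ q^(2^n) := pow_le_pow_right₀ (le_of_lt hq1) (le_of_lt (Nat.lt_two_pow_self (n := n)))
  linarith [hbound n]

lemma parallelogram (hA : A.IsPositive) (x y : H) :
    (aNorm A (x + y))^2 + (aNorm A (x - y))^2 = 2 * (aNorm A x)^2 + 2 * (aNorm A y)^2 := by
  have h : (inner ℂ (A (x+y)) (x+y) : ℂ) + (inner ℂ (A (x-y)) (x-y) : ℂ)
      = 2 * inner ℂ (A x) x + 2 * inner ℂ (A y) y := by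
    simp only [map_add, map_sub, inner_add_left, inner_add_right, inner_sub_left,
      inner_sub_right]
    ring
  have := congrArg Complex.re h
  simp only [Complex.add_re, Complex.mul_re] at this
  rw [aNorm_sq hA, aNorm_sq hA, aNorm_sq hA, aNorm_sq hA]
  simpa using this

lemma L3 (hA : A.IsPositive) (R : H →L[ℂ] H)
    (hherm : ∀ x y : H, (inner ℂ (A (R x)) y : ℂ) = conj (inner ℂ (A (R y)) x))
    (M : ℝ) (hM : 0 ≤ M)
    (hbound : ∀ y, ‖inner ℂ (A (R y)) y‖ ≤ M * (aNorm A y)^2) (x : H) :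
    aNorm A (R x) ≤ M * aNorm A x := by
  by_cases hRx : aNorm A (R x) = 0
  · rw [hRx]; exact mul_nonneg hM (aNorm_nonneg x)
  have hRxpos : 0 < aNorm A (R x) := lt_of_le_of_ne (aNorm_nonneg _) (Ne.symm hRx)
  by_cases hx : aNorm A x = 0
  · exfalso
    have h1 : (aNorm A (R x))^2 ≤ ‖inner ℂ (A (R x)) (R x)‖ := by
      rw [aNorm_sq hA]; exact Complex.re_le_norm _
    have h2 : ‖inner ℂ (A (R x)) (R x)‖ = ‖inner ℂ (A (R (R x))) x‖ := by
      rw [hherm x (R x), Complex.norm_conj]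
    have h3 : ‖inner ℂ (A (R (R x))) x‖ ≤ aNorm A (R (R x)) * aNorm A x := aCS hA _ _
    rw [hx, mul_zero] at h3
    nlinarith
  have hxpos : 0 < aNorm A x := lt_of_le_of_ne (aNorm_nonneg _) (Ne.symm hx)
  set r : ℝ := aNorm A (R x) with hr
  set s : ℝ := aNorm A x / r with hs
  have hspos : 0 < s := div_pos hxpos hRxpos
  set y : H := (s : ℂ) • R x with hy
  have hyn : aNorm A y = aNorm A x := by
    rw [hy, aNorm_smul hA, Complex.norm_real, Real.norm_eq_abs, abs_of_pos hspos, hs, ← hr]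
    field_simp
  -- expansion of the two quadratic forms
  have expand : ∀ u v : H, (inner ℂ (A (R (u + v))) (u + v) : ℂ)
      = inner ℂ (A (R u)) u + inner ℂ (A (R u)) v + inner ℂ (A (R v)) u + inner ℂ (A (R v)) v := by
    intro u v
    simp only [map_add, inner_add_left, inner_add_right]
    ring
  have expand' : ∀ u v : H, (inner ℂ (A (R (u - v))) (u - v) : ℂ)
      = inner ℂ (A (R u)) u - inner ℂ (A (R u)) v - inner ℂ (A (R v)) u + inner ℂ (A (R v)) v := by
    intro u v
    simp only [map_sub, inner_sub_left, inner_sub_right]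
    ring
  have key : 4 * (s * r^2) ≤ M * ((aNorm A (x+y))^2 + (aNorm A (x-y))^2) := by
    have hdiff : (inner ℂ (A (R (x+y))) (x+y) : ℂ).re - (inner ℂ (A (R (x-y))) (x-y) : ℂ).re
        = 4 * (inner ℂ (A (R x)) y : ℂ).re := by
      rw [expand, expand']
      have hconj : (inner ℂ (A (R y)) x : ℂ) = conj (inner ℂ (A (R x)) y) := hherm y x
      rw [hconj]
      simp only [Complex.add_re, Complex.sub_re, Complex.conj_re]
      ring
    have hval : (inner ℂ (A (R x)) y : ℂ).re = s * r^2 := by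
      rw [hy, inner_smul_right]
      rw [show ((s:ℂ) * inner ℂ (A (R x)) (R x)) = ((s:ℝ):ℂ) * inner ℂ (A (R x)) (R x) from rfl]
      rw [Complex.re_ofReal_mul]
      congr 1
      rw [hr, aNorm_sq hA]
    have h1 : (inner ℂ (A (R (x+y))) (x+y) : ℂ).re ≤ M * (aNorm A (x+y))^2 :=
      le_trans (Complex.re_le_norm _) (hbound _)
    have h2 : -(M * (aNorm A (x-y))^2) ≤ (inner ℂ (A (R (x-y))) (x-y) : ℂ).re := by
      have hh : |(inner ℂ (A (R (x-y))) (x-y) : ℂ).re| ≤ M * (aNorm A (x-y))^2 :=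
        (Complex.abs_re_le_norm _).trans (hbound _)
      linarith [neg_abs_le ((inner ℂ (A (R (x-y))) (x-y) : ℂ).re)]
    calc 4 * (s * r^2) = 4 * (inner ℂ (A (R x)) y : ℂ).re := by rw [hval]
      _ = (inner ℂ (A (R (x+y))) (x+y) : ℂ).re - (inner ℂ (A (R (x-y))) (x-y) : ℂ).re := hdiff.symm
      _ ≤ M * (aNorm A (x+y))^2 + M * (aNorm A (x-y))^2 := by linarith
      _ = M * ((aNorm A (x+y))^2 + (aNorm A (x-y))^2) := by ring
  rw [parallelogram hA x y, hyn] at key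
  -- key : 4 * (s * r^2) ≤ M * (2‖x‖² + 2‖x‖²)
  have hsr : s * r^2 = aNorm A x * r := by
    rw [hs]; field_simp
  rw [hsr] at key
  have : 4 * (aNorm A x * r) ≤ 4 * (M * ((aNorm A x)^2)) := by nlinarith
  have h5 : aNorm A x * r ≤ M * (aNorm A x * aNorm A x) := by nlinarith
  calc r = (aNorm A x * r) / aNorm A x := by field_simp
    _ ≤ (M * (aNorm A x * aNorm A x)) / aNorm A x := by
        exact div_le_div_of_nonneg_right h5 (le_of_lt hxpos)
    _ = M * aNorm A x := by field_simp

end Aux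

set_option maxHeartbeats 1000000 in
open ComplexConjugate in
theorem stmt16 (A T S : H →L[ℂ] H) (hA : A.IsPositive) (hT : IsAAdjoint A T S)
    (α : ℝ) (hα : α ∈ Set.Icc (0:ℝ) 1) :
    alphaNorm A T α ^ 2 ≥
      max ((1/2) * opNormA A ((α/4) • (S ∘L T + T ∘L S) + (1 - α) • (S ∘L T)))
          ((1/3) * opNormA A ((α/2) • (S ∘L T + T ∘L S) + (1 - α) • (S ∘L T))) := by
  obtain ⟨hα0, hα1⟩ := hα
  have hAS : A ∘L S = (ContinuousLinearMap.adjoint T) ∘L A := hT.1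
  have hAT : A ∘L T = (ContinuousLinearMap.adjoint S) ∘L A := by
    have h := congrArg ContinuousLinearMap.adjoint hAS
    rw [adjoint_comp, adjoint_comp, adjoint_adjoint, hA.isSelfAdjoint.adjoint_eq] at h
    exact h.symm
  have hASx : ∀ x, A (S x) = (ContinuousLinearMap.adjoint T) (A x) :=
    fun x => congrFun (congrArg DFunLike.coe hAS) x
  have hATx : ∀ x, A (T x) = (ContinuousLinearMap.adjoint S) (A x) :=
    fun x => congrFun (congrArg DFunLike.coe hAT) x
  -- key inner product identities
  have STinner : ∀ y x : H, (inner ℂ (A (S (T y))) x : ℂ) = inner ℂ (A (T y)) (T x) := by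
    intro y x; rw [hASx (T y), adjoint_inner_left]
  have TSinner : ∀ y x : H, (inner ℂ (A (T (S y))) x : ℂ) = inner ℂ (A (S y)) (S x) := by
    intro y x; rw [hATx (S y), adjoint_inner_left]
  have cross1 : ∀ y x : H, (inner ℂ (A (S y)) x : ℂ) = conj (inner ℂ (A (T x)) y : ℂ) := by
    intro y x
    rw [hASx y, adjoint_inner_left, sa hA (T x) y, inner_conj_symm]
  have cross2 : ∀ y x : H, (inner ℂ (A (T y)) x : ℂ) = conj (inner ℂ (A (S x)) y : ℂ) := by
    intro y x
    rw [hATx y, adjoint_inner_left, sa hA (S x) y, inner_conj_symm]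
  have hermST : ∀ x y : H, (inner ℂ (A (S (T x))) y : ℂ) = conj (inner ℂ (A (S (T y))) x : ℂ) := by
    intro x y
    rw [STinner x y, STinner y x, inner_conj_sa hA (T x) (T y), Complex.conj_conj]
  have hermTS : ∀ x y : H, (inner ℂ (A (T (S x))) y : ℂ) = conj (inner ℂ (A (T (S y))) x : ℂ) := by
    intro x y
    rw [TSinner x y, TSinner y x, inner_conj_sa hA (S x) (S y), Complex.conj_conj]
  -- L2 for S∘T
  have hermST_clm : A ∘L (S ∘L T) = (ContinuousLinearMap.adjoint (S ∘L T)) ∘L A := by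
    rw [adjoint_comp, ← ContinuousLinearMap.comp_assoc, hAS,
      ContinuousLinearMap.comp_assoc, hAT, ← ContinuousLinearMap.comp_assoc]
  have hL2 : ∀ z, aNorm A (S (T z)) ≤ ‖S ∘L T‖ * aNorm A z := fun z => L2 hA _ hermST_clm z
  set N : ℝ := alphaNorm A T α with hNdef
  set SS : Set ℝ := {r | ∃ x, aNorm A x = 1 ∧
    r = Real.sqrt (α * ‖aInner A (T x) x‖ ^ 2 + (1 - α) * aNorm A (T x) ^ 2)}
    with hSS
  have hNs : N = sSup SS := rfl
  have habsinner : ∀ x : H, aInner A (T x) x = inner ℂ (A (T x)) x := fun _ => rfl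
  have hTy_le : ∀ y : H, aNorm A y = 1 → (aNorm A (T y))^2 ≤ ‖S ∘L T‖ := by
    intro y hy
    have e : (aNorm A (T y))^2 = (inner ℂ (A (S (T y))) y : ℂ).re := by
      rw [aNorm_sq hA, STinner y y]
    rw [e]
    calc (inner ℂ (A (S (T y))) y : ℂ).re ≤ ‖inner ℂ (A (S (T y))) y‖ :=
        Complex.re_le_norm _
      _ ≤ aNorm A (S (T y)) * aNorm A y := aCS hA _ _
      _ ≤ (‖S ∘L T‖ * aNorm A y) * aNorm A y := by
          apply mul_le_mul_of_nonneg_right (hL2 y) (aNorm_nonneg _)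
      _ = ‖S ∘L T‖ := by rw [hy]; ring
  have hbdd : BddAbove SS := by
    refine ⟨Real.sqrt ‖S ∘L T‖, ?_⟩
    rintro r ⟨x, hx, rfl⟩
    apply Real.sqrt_le_sqrt
    have ha : ‖aInner A (T x) x‖ ≤ aNorm A (T x) := by
      have h := aCS hA (T x) x
      rw [hx, mul_one] at h
      exact h
    have hb := hTy_le x hx
    have h0 := norm_nonneg (aInner A (T x) x)
    have h1 := aNorm_nonneg (A := A) (T x)
    have haa : ‖aInner A (T x) x‖^2 ≤ aNorm A (T x)^2 := by nlinarith
    nlinarith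
  have hN0 : 0 ≤ N := by
    rw [hNs]
    exact Real.sSup_nonneg fun r hr => by obtain ⟨x, hx, rfl⟩ := hr; exact Real.sqrt_nonneg _
  have F : ∀ y : H, aNorm A y = 1 →
      α * (‖inner ℂ (A (T y)) y‖)^2 + (1-α) * (aNorm A (T y))^2 ≤ N^2 := by
    intro y hy
    have hmem : Real.sqrt (α * ‖aInner A (T y) y‖ ^ 2
        + (1 - α) * aNorm A (T y) ^ 2) ∈ SS := ⟨y, hy, rfl⟩
    have hle := le_csSup hbdd hmem
    rw [← hNs] at hle
    have hnn : 0 ≤ α * ‖aInner A (T y) y‖ ^ 2 + (1 - α) * aNorm A (T y) ^ 2 := by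
      have := norm_nonneg (aInner A (T y) y)
      have := aNorm_nonneg (A := A) (T y)
      nlinarith
    have hsq := Real.sq_sqrt hnn
    simp only [habsinner] at hsq hle hnn
    nlinarith [Real.sqrt_nonneg (α * ‖(inner ℂ (A (T y)) y : ℂ)‖ ^ 2
        + (1 - α) * aNorm A (T y) ^ 2), hsq, hle, hN0]
  -- homogeneous numerical radius bound
  have Ga : ∀ y : H, ‖inner ℂ (A (T y)) y‖ ≤ N * (aNorm A y)^2 := by
    intro y
    by_cases hy0 : aNorm A y = 0
    · have h := aCS hA (T y) y
      rw [hy0, mul_zero] at h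
      have h2 : ‖inner ℂ (A (T y)) y‖ = 0 :=
        le_antisymm h (norm_nonneg _)
      rw [h2, hy0]
      simp
    · have hyp : 0 < aNorm A y := lt_of_le_of_ne (aNorm_nonneg _) (Ne.symm hy0)
      set t : ℝ := aNorm A y with ht
      set y' : H := ((t⁻¹ : ℝ) : ℂ) • y with hy'
      have hty' : aNorm A y' = 1 := by
        rw [hy', aNorm_smul hA, Complex.norm_real, Real.norm_eq_abs, abs_of_pos (inv_pos.2 hyp), ← ht,
          inv_mul_cancel₀ (ne_of_gt hyp)]
      have hval : (inner ℂ (A (T y')) y' : ℂ)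
          = ((t⁻¹ : ℝ) : ℂ) * ((t⁻¹ : ℝ) : ℂ) * inner ℂ (A (T y)) y := by
        rw [hy', map_smul, map_smul, inner_smul_left, inner_smul_right, Complex.conj_ofReal]
        ring
      have ha' : ‖inner ℂ (A (T y')) y'‖ = t⁻¹^2 * ‖inner ℂ (A (T y)) y‖ := by
        rw [hval, norm_mul, norm_mul, Complex.norm_real, Real.norm_eq_abs, abs_of_pos (inv_pos.2 hyp)]
        ring
      have hb' : ‖inner ℂ (A (T y')) y'‖ ≤ aNorm A (T y') := by
        have h := aCS hA (T y') y'
        rw [hty', mul_one] at h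
        exact h
      have hF := F y' hty'
      have ha'N : ‖inner ℂ (A (T y')) y'‖ ≤ N := by
        have h0 := norm_nonneg (inner ℂ (A (T y')) y' : ℂ)
        have hbn := aNorm_nonneg (A := A) (T y')
        have haa : ‖inner ℂ (A (T y')) y'‖^2 ≤ aNorm A (T y')^2 := by nlinarith
        nlinarith
      rw [ha'] at ha'N
      have ht2 : (0:ℝ) < t^2 := by positivity
      calc ‖inner ℂ (A (T y)) y‖
          = t^2 * (t⁻¹^2 * ‖inner ℂ (A (T y)) y‖) := by
            field_simp
        _ ≤ t^2 * N := by
            apply mul_le_mul_of_nonneg_left ha'N (le_of_lt ht2)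
        _ = N * (aNorm A y)^2 := by rw [← ht]; ring
  have Fb : ∀ y : H, (1-α) * (aNorm A (T y))^2 ≤ N^2 * (aNorm A y)^2 := by
    intro y
    by_cases hy0 : aNorm A y = 0
    · have e : (aNorm A (T y))^2 = (inner ℂ (A (S (T y))) y : ℂ).re := by
        rw [aNorm_sq hA, STinner y y]
      have h := aCS hA (S (T y)) y
      rw [hy0, mul_zero] at h
      have h2 : (aNorm A (T y))^2 ≤ 0 := by
        rw [e]
        exact le_trans (Complex.re_le_norm _) h
      have h3 : (aNorm A (T y))^2 = 0 := le_antisymm h2 (sq_nonneg _)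
      rw [h3, hy0]
      nlinarith [sq_nonneg N]
    · have hyp : 0 < aNorm A y := lt_of_le_of_ne (aNorm_nonneg _) (Ne.symm hy0)
      set t : ℝ := aNorm A y with ht
      set y' : H := ((t⁻¹ : ℝ) : ℂ) • y with hy'
      have hty' : aNorm A y' = 1 := by
        rw [hy', aNorm_smul hA, Complex.norm_real, Real.norm_eq_abs, abs_of_pos (inv_pos.2 hyp), ← ht,
          inv_mul_cancel₀ (ne_of_gt hyp)]
      have hTy' : aNorm A (T y') = t⁻¹ * aNorm A (T y) := by
        rw [hy', map_smul, aNorm_smul hA, Complex.norm_real, Real.norm_eq_abs, abs_of_pos (inv_pos.2 hyp)]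
      have hF := F y' hty'
      rw [hTy'] at hF
      have ht2 : (0:ℝ) < t^2 := by positivity
      have h4 : (1-α) * (t⁻¹ * aNorm A (T y))^2 ≤ N^2 := by
        nlinarith [norm_nonneg (inner ℂ (A (T y')) y' : ℂ), sq_nonneg (‖inner ℂ (A (T y')) y'‖)]
      have h5 : (1-α) * (aNorm A (T y))^2 = t^2 * ((1-α) * (t⁻¹ * aNorm A (T y))^2) := by
        field_simp
      rw [h5]
      calc t^2 * ((1-α) * (t⁻¹ * aNorm A (T y))^2) ≤ t^2 * N^2 :=
          mul_le_mul_of_nonneg_left h4 (le_of_lt ht2)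
        _ = N^2 * t^2 := by ring
  -- the real and imaginary parts of T w.r.t. A
  set Rp : H →L[ℂ] H := ((2:ℂ))⁻¹ • (S + T) with hRp
  set Rm : H →L[ℂ] H := (Complex.I * (2:ℂ)⁻¹) • (T - S) with hRm
  have hRpx : ∀ x, Rp x = ((2:ℂ))⁻¹ • (S x + T x) := by intro x; rw [hRp]; rfl
  have hRmx : ∀ x, Rm x = (Complex.I * (2:ℂ)⁻¹) • (T x - S x) := by intro x; rw [hRm]; rfl
  have conj2 : (starRingEnd ℂ) ((2:ℂ)⁻¹) = (2:ℂ)⁻¹ := by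
    rw [map_inv₀, map_ofNat]
  have hermRp : ∀ x y : H, (inner ℂ (A (Rp x)) y : ℂ) = conj (inner ℂ (A (Rp y)) x : ℂ) := by
    intro x y
    simp only [hRpx, map_smul, inner_smul_left, map_add, inner_add_left, map_mul, map_inv₀,
      map_ofNat, Complex.conj_conj, cross1]
    ring
  have hermRm : ∀ x y : H, (inner ℂ (A (Rm x)) y : ℂ) = conj (inner ℂ (A (Rm y)) x : ℂ) := by
    intro x y
    rw [hRmx x, hRmx y, map_smul, map_smul, inner_smul_left, inner_smul_left,
      map_sub A, map_sub A, inner_sub_left, inner_sub_left, cross1 x y, cross1 y x]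
    generalize (inner ℂ (A (T x)) y : ℂ) = z1
    generalize (inner ℂ (A (T y)) x : ℂ) = z2
    simp only [map_mul, map_sub, map_neg, neg_neg, Complex.conj_conj, Complex.conj_I, conj2]
    ring
  have boundRp : ∀ y : H, ‖inner ℂ (A (Rp y)) y‖ ≤ N * (aNorm A y)^2 := by
    intro y
    have hv : (inner ℂ (A (Rp y)) y : ℂ) = (((inner ℂ (A (T y)) y : ℂ).re : ℝ) : ℂ) := by
      rw [hRpx y, map_smul, inner_smul_left, map_add, inner_add_left, cross1 y y, conj2]
      generalize (inner ℂ (A (T y)) y : ℂ) = z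
      apply Complex.ext <;> simp <;> ring
    rw [hv, Complex.norm_real, Real.norm_eq_abs]
    exact le_trans (Complex.abs_re_le_norm _) (Ga y)
  have boundRm : ∀ y : H, ‖inner ℂ (A (Rm y)) y‖ ≤ N * (aNorm A y)^2 := by
    intro y
    have hv : (inner ℂ (A (Rm y)) y : ℂ) = (((inner ℂ (A (T y)) y : ℂ).im : ℝ) : ℂ) := by
      rw [hRmx y, map_smul, inner_smul_left, map_sub, inner_sub_left, cross1 y y,
        map_mul, Complex.conj_I, conj2]
      generalize (inner ℂ (A (T y)) y : ℂ) = z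
      apply Complex.ext <;>
        simp [Complex.mul_re, Complex.mul_im, Complex.conj_re, Complex.conj_im] <;> ring
    rw [hv, Complex.norm_real, Real.norm_eq_abs]
    exact le_trans (Complex.abs_im_le_norm _) (Ga y)
  have HRp : ∀ x, aNorm A (Rp x) ≤ N * aNorm A x := fun x => L3 hA Rp hermRp N hN0 boundRp x
  have HRm : ∀ x, aNorm A (Rm x) ≤ N * aNorm A x := fun x => L3 hA Rm hermRm N hN0 boundRm x
  have Hsum : ∀ y : H, (aNorm A (T y))^2 + (aNorm A (S y))^2
      = 2 * (aNorm A (Rp y))^2 + 2 * (aNorm A (Rm y))^2 := by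
    intro y
    have hcplx : 2 * (inner ℂ (A (Rp y)) (Rp y) : ℂ) + 2 * (inner ℂ (A (Rm y)) (Rm y) : ℂ)
        = inner ℂ (A (T y)) (T y) + inner ℂ (A (S y)) (S y) := by
      rw [hRpx y, hRmx y]
      simp only [map_smul, inner_smul_left, inner_smul_right, map_add, map_sub,
        inner_add_left, inner_add_right, inner_sub_left, inner_sub_right, map_mul, map_inv₀,
        map_ofNat, Complex.conj_I]
      ring_nf
      rw [Complex.I_sq]
      ring
    have hre := congrArg Complex.re hcplx
    simp only [Complex.add_re, Complex.mul_re, Complex.re_ofNat, Complex.im_ofNat,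
      zero_mul, sub_zero] at hre
    rw [aNorm_sq hA (T y), aNorm_sq hA (S y), aNorm_sq hA (Rp y), aNorm_sq hA (Rm y)]
    linarith
  have HTS : ∀ y : H, (aNorm A (T y))^2 + (aNorm A (S y))^2 ≤ 4 * N^2 * (aNorm A y)^2 := by
    intro y
    have h1 := HRp y
    have h2 := HRm y
    have e := Hsum y
    have n1 := aNorm_nonneg (A := A) (Rp y)
    have n2 := aNorm_nonneg (A := A) (Rm y)
    have n3 := aNorm_nonneg (A := A) y
    nlinarith [mul_self_le_mul_self n1 h1, mul_self_le_mul_self n2 h2]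
  -- real smul to complex smul
  have hrs : ∀ (r : ℝ) (u : H), r • u = ((r : ℂ)) • u := by
    intro r u
    rw [← algebraMap_smul ℂ r u]
    norm_num
  -- the two combination operators
  set R1 : H →L[ℂ] H := (α/4) • (S ∘L T + T ∘L S) + (1 - α) • (S ∘L T) with hR1
  set R2 : H →L[ℂ] H := (α/2) • (S ∘L T + T ∘L S) + (1 - α) • (S ∘L T) with hR2
  have hR1x : ∀ x, R1 x = (((α/4 : ℝ)) : ℂ) • (S (T x) + T (S x))
      + (((1 - α : ℝ)) : ℂ) • (S (T x)) := by
    intro x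
    rw [hR1]
    simp only [ContinuousLinearMap.add_apply, ContinuousLinearMap.coe_smul',
      Pi.smul_apply, ContinuousLinearMap.comp_apply, hrs]
  have hR2x : ∀ x, R2 x = (((α/2 : ℝ)) : ℂ) • (S (T x) + T (S x))
      + (((1 - α : ℝ)) : ℂ) • (S (T x)) := by
    intro x
    rw [hR2]
    simp only [ContinuousLinearMap.add_apply, ContinuousLinearMap.coe_smul',
      Pi.smul_apply, ContinuousLinearMap.comp_apply, hrs]
  -- generic treatment of c • (ST + TS) + d • ST
  have hermR : ∀ (c d : ℝ) (x y : H),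
      (inner ℂ (A ((c : ℂ) • (S (T x) + T (S x)) + (d : ℂ) • (S (T x)))) y : ℂ)
      = conj (inner ℂ (A ((c : ℂ) • (S (T y) + T (S y)) + (d : ℂ) • (S (T y)))) x : ℂ) := by
    intro c d x y
    simp only [map_add, map_smul, inner_add_left, inner_smul_left, Complex.conj_ofReal,
      hermST x y, hermTS x y, map_mul]
    all_goals simp only [map_add, map_mul, Complex.conj_conj, Complex.conj_ofReal]
    all_goals ring
  have valR : ∀ (c d : ℝ) (y : H),
      (inner ℂ (A ((c : ℂ) • (S (T y) + T (S y)) + (d : ℂ) • (S (T y)))) y : ℂ)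
      = ((c * ((aNorm A (T y))^2 + (aNorm A (S y))^2) + d * (aNorm A (T y))^2 : ℝ) : ℂ) := by
    intro c d y
    have e1 : (inner ℂ (A (S (T y))) y : ℂ) = (((aNorm A (T y))^2 : ℝ) : ℂ) := by
      rw [STinner y y, inner_self_real hA (T y)]
    have e2 : (inner ℂ (A (T (S y))) y : ℂ) = (((aNorm A (S y))^2 : ℝ) : ℂ) := by
      rw [TSinner y y, inner_self_real hA (S y)]
    simp only [map_add, map_smul, inner_add_left, inner_smul_left, Complex.conj_ofReal, e1, e2]
    push_cast
    ring
  have boundgen : ∀ (c d : ℝ) (M : ℝ), 0 ≤ c → 0 ≤ d →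
      (∀ y : H, c * ((aNorm A (T y))^2 + (aNorm A (S y))^2) + d * (aNorm A (T y))^2
        ≤ M * (aNorm A y)^2) →
      ∀ y : H, ‖inner ℂ (A ((c : ℂ) • (S (T y) + T (S y)) + (d : ℂ) • (S (T y)))) y‖
        ≤ M * (aNorm A y)^2 := by
    intro c d M hc hd hM y
    rw [valR c d y, Complex.norm_real, Real.norm_eq_abs]
    have hnn : 0 ≤ c * ((aNorm A (T y))^2 + (aNorm A (S y))^2) + d * (aNorm A (T y))^2 := by
      have := sq_nonneg (aNorm A (T y))
      have := sq_nonneg (aNorm A (S y))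
      nlinarith
    rw [abs_of_nonneg hnn]
    exact hM y
  have bound1 : ∀ y : H, (α/4) * ((aNorm A (T y))^2 + (aNorm A (S y))^2)
      + (1 - α) * (aNorm A (T y))^2 ≤ (2 * N^2) * (aNorm A y)^2 := by
    intro y
    have h1 := HTS y
    have h2 := Fb y
    have h3 : (α/4) * ((aNorm A (T y))^2 + (aNorm A (S y))^2)
        ≤ (α/4) * (4 * N^2 * (aNorm A y)^2) :=
      mul_le_mul_of_nonneg_left h1 (by linarith)
    have h4 : α * (N^2 * (aNorm A y)^2) ≤ 1 * (N^2 * (aNorm A y)^2) :=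
      mul_le_mul_of_nonneg_right hα1 (by positivity)
    nlinarith
  have bound2 : ∀ y : H, (α/2) * ((aNorm A (T y))^2 + (aNorm A (S y))^2)
      + (1 - α) * (aNorm A (T y))^2 ≤ (3 * N^2) * (aNorm A y)^2 := by
    intro y
    have h1 := HTS y
    have h2 := Fb y
    have h3 : (α/2) * ((aNorm A (T y))^2 + (aNorm A (S y))^2)
        ≤ (α/2) * (4 * N^2 * (aNorm A y)^2) :=
      mul_le_mul_of_nonneg_left h1 (by linarith)
    have h4 : α * (N^2 * (aNorm A y)^2) ≤ 1 * (N^2 * (aNorm A y)^2) :=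
      mul_le_mul_of_nonneg_right hα1 (by positivity)
    nlinarith
  -- seminorm bounds via L3
  have hermR1 : ∀ x y : H, (inner ℂ (A (R1 x)) y : ℂ) = conj (inner ℂ (A (R1 y)) x : ℂ) := by
    intro x y
    rw [hR1x x, hR1x y]
    exact hermR (α/4) (1-α) x y
  have hermR2 : ∀ x y : H, (inner ℂ (A (R2 x)) y : ℂ) = conj (inner ℂ (A (R2 y)) x : ℂ) := by
    intro x y
    rw [hR2x x, hR2x y]
    exact hermR (α/2) (1-α) x y
  have hN2 : 0 ≤ 2 * N^2 := by positivity
  have hN3 : 0 ≤ 3 * N^2 := by positivity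
  have keyR1 : ∀ x : H, aNorm A (R1 x) ≤ (2 * N^2) * aNorm A x := by
    apply L3 hA R1 hermR1 (2 * N^2) hN2
    intro y
    rw [hR1x y]
    exact boundgen (α/4) (1-α) (2*N^2) (by linarith) (by linarith) bound1 y
  have keyR2 : ∀ x : H, aNorm A (R2 x) ≤ (3 * N^2) * aNorm A x := by
    apply L3 hA R2 hermR2 (3 * N^2) hN3
    intro y
    rw [hR2x y]
    exact boundgen (α/2) (1-α) (3*N^2) (by linarith) (by linarith) bound2 y
  have main1 : opNormA A R1 ≤ 2 * N^2 := by
    apply Real.sSup_le _ hN2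
    rintro r ⟨x, -, hx1, rfl⟩
    have := keyR1 x
    rw [hx1, mul_one] at this
    exact this
  have main2 : opNormA A R2 ≤ 3 * N^2 := by
    apply Real.sSup_le _ hN3
    rintro r ⟨x, -, hx1, rfl⟩
    have := keyR2 x
    rw [hx1, mul_one] at this
    exact this
  rw [ge_iff_le, max_le_iff]
  constructor
  · linarith
  · linarith
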